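/- For any nonempty index k = (k_1,…,k_r) of positive integers and any positive integer N, the multiple sum of Hoffman's type H_{<N}(k) = ∑_{1≤m_1≤⋯≤m_r<N} ((-1)^{m_r-1}/(m_1^{k_1}⋯m_r^{k_r}))·binom(N-1,m_r) equals H^♭_{<N}(k) = ∑ (1/(n_{r1}⋯n_{r k_r})) ∏_{i=1}^{r-1} 1/((N-n_{i1}) n_{i2}⋯n_{i k_i}), where the latter sum runs over n_{ij} ∈ [1,N-1] with n_{i1} ≤ ⋯ ≤ n_{i k_i} for each i and n_{(i-1)1} ≤ n_{i k_i} for 2 ≤ i ≤ r. -/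

import Mathlib

/-- Auxiliary recursion: `zetaStarAux M t` sums over `0 < m₁ ≤ ⋯ ≤ m_r < M` where the
exponent list `t` lists the exponents from the *largest* variable downwards. -/
def zetaStarAux : ℕ → List ℕ → ℚ
  | _, [] => 1
  | M, k :: t => ∑ m ∈ Finset.Ioo 0 M, (1 / (m : ℚ) ^ k) * zetaStarAux (m + 1) t

/-- The multiple star harmonic sum `ζ⋆_{<N}(k₁,…,k_r) = ∑_{0<m₁≤⋯≤m_r<N} ∏ᵢ 1/mᵢ^{kᵢ}`. -/
def zetaStar (N : ℕ) (ks : List ℕ) : ℚ := zetaStarAux N ks.reverse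

/-- The multiple sum of Hoffman's type
`H_{<N}(k₁,…,k_r) = ∑_{1≤m₁≤⋯≤m_r<N} ((-1)^{m_r-1}/(m₁^{k₁}⋯m_r^{k_r}))·binom(N-1,m_r)`. -/
def hoffmanSum (N : ℕ) (ks : List ℕ) : ℚ :=
  match ks.reverse with
  | [] => 1
  | k :: t => ∑ m ∈ Finset.Ioo 0 N,
      ((-1 : ℚ) ^ (m - 1) * ((N - 1).choose m : ℚ) / (m : ℚ) ^ k) * zetaStarAux (m + 1) t

/-- Auxiliary recursion for the ♭-sum of Hoffman's type: identical to the recursion for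
the ⋆♭-sum except that the bottom variable of the *last* block carries the factor `1/n`
instead of `1/(N-n)`.  `hAux N lo hi j t`: the current variable ranges over `[lo, hi]`,
`j` variables remain in the current block, and `t` lists the remaining blocks. -/
def hAux (N : ℕ) : ℕ → ℕ → ℕ → List ℕ → ℚ
  | _, _, 0, [] => 1
  | lo, _, 0, k :: t => hAux N lo (N - 1) k t
  | lo, hi, 1, [] => ∑ n ∈ Finset.Icc lo hi, (1 / (n : ℚ))
  | lo, hi, 1, k :: t => ∑ n ∈ Finset.Icc lo hi, (1 / ((N : ℚ) - (n : ℚ))) * hAux N n 0 0 (k :: t)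
  | lo, hi, (j+2), t => ∑ n ∈ Finset.Icc lo hi, (1 / (n : ℚ)) * hAux N 1 n (j+1) t
  termination_by _ _ j t => (t.length, j)

/-- The ♭-sum `H♭_{<N}(k₁,…,k_r)`: the sum of
`(1/(n_{r1}⋯n_{r k_r}))·∏_{i=1}^{r-1} 1/((N-n_{i1})·n_{i2}⋯n_{i k_i})` over
`n_{ij} ∈ [1,N-1]` with `n_{i1} ≤ ⋯ ≤ n_{i k_i}` for each `i` and
`n_{(i-1)1} ≤ n_{i k_i}` for `2 ≤ i ≤ r`. -/
def hoffmanFlat (N : ℕ) (ks : List ℕ) : ℚ := hAux N 1 (N - 1) 0 ks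

open Finset

section MSWHelpers

lemma MSW_sum_split (φ : ℕ → ℚ) (lo hi : ℕ) (h1 : 1 ≤ lo) (h2 : lo ≤ hi + 1) :
    ∑ n ∈ Icc 1 hi, φ n = (∑ n ∈ Icc 1 (lo-1), φ n) + ∑ n ∈ Icc lo hi, φ n := by
  rw [← Finset.sum_union]
  · congr 1
    ext n; simp only [Finset.mem_union, Finset.mem_Icc]; omega
  · rw [Finset.disjoint_left]
    intro a ha hb; simp only [Finset.mem_Icc] at ha hb; omega

lemma MSW_sum_triangle (lo hi : ℕ) (F : ℕ → ℕ → ℚ) :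
    ∑ a ∈ Icc lo hi, ∑ n ∈ Icc lo a, F a n = ∑ n ∈ Icc lo hi, ∑ a ∈ Icc n hi, F a n := by
  have h1 : ∑ a ∈ Icc lo hi, ∑ n ∈ Icc lo a, F a n
      = ∑ a ∈ Icc lo hi, ∑ n ∈ Icc lo hi, if n ≤ a then F a n else 0 := by
    refine Finset.sum_congr rfl fun a ha => ?_
    simp only [Finset.mem_Icc] at ha
    rw [← Finset.sum_filter]
    congr 1
    ext n; simp only [Finset.mem_filter, Finset.mem_Icc]; omega
  rw [h1, Finset.sum_comm]
  refine Finset.sum_congr rfl fun n hn => ?_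
  simp only [Finset.mem_Icc] at hn
  rw [← Finset.sum_filter]
  congr 1
  ext a; simp only [Finset.mem_filter, Finset.mem_Icc]; omega

/-- hockey stick in ℚ : `∑_{n=1}^{c} C(n,μ)/n = C(c,μ)/μ` for `μ ≥ 1`. -/
lemma MSW_hockey (μ : ℕ) (hμ : 1 ≤ μ) : ∀ c : ℕ,
    ∑ n ∈ Icc 1 c, (n.choose μ : ℚ) / n = (c.choose μ : ℚ) / μ := by
  obtain ⟨m, rfl⟩ : ∃ m, μ = m + 1 := ⟨μ-1, by omega⟩
  intro c
  induction c with
  | zero => simp [Nat.choose_eq_zero_of_lt hμ]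
  | succ c ih =>
    rw [show Icc 1 (c+1) = insert (c+1) (Icc 1 c) by ext n; simp [Finset.mem_Icc]; omega,
      Finset.sum_insert (by simp), ih]
    have hq : ((c+1 : ℕ) : ℚ) * (c.choose m : ℚ) = ((c+1).choose (m+1) : ℚ) * ((m+1 : ℕ) : ℚ) := by
      exact_mod_cast congrArg (Nat.cast : ℕ → ℚ) (Nat.add_one_mul_choose_eq c m)
    have hpascal : ((c+1).choose (m+1) : ℚ) = (c.choose m : ℚ) + (c.choose (m+1) : ℚ) := by
      exact_mod_cast congrArg (Nat.cast : ℕ → ℚ) (Nat.choose_succ_succ c m)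
    have hc : ((c : ℚ) + 1) ≠ 0 := by positivity
    have hm : ((m : ℚ) + 1) ≠ 0 := by positivity
    push_cast at hq hpascal ⊢
    have h1 : ((c+1).choose (m+1) : ℚ)/((c:ℚ)+1) = (c.choose m : ℚ)/((m:ℚ)+1) := by
      rw [div_eq_div_iff hc hm]; push_cast; linarith [hq]
    push_cast at h1
    rw [h1, ← add_div, ← hpascal]

/-- `∑_{μ=1}^{M} (-1)^{μ-1} C(M,μ) = 1` for `M ≥ 1`. -/
lemma MSW_alt_sum_choose (M : ℕ) (hM : 1 ≤ M) :
    ∑ μ ∈ Icc 1 M, (-1 : ℚ)^(μ-1) * (M.choose μ : ℚ) = 1 := by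
  have h := Int.alternating_sum_range_choose (n := M)
  rw [if_neg (by omega)] at h
  have hq : ∑ i ∈ range (M+1), (-1 : ℚ)^i * (M.choose i : ℚ) = 0 := by
    exact_mod_cast congrArg (Int.cast : ℤ → ℚ) h
  rw [show range (M+1) = insert 0 (Icc 1 M) by ext n; simp [Finset.mem_Icc, Finset.mem_range]; omega,
    Finset.sum_insert (by simp)] at hq
  simp only [pow_zero, Nat.choose_zero_right, Nat.cast_one, one_mul] at hq
  have h2 : ∑ μ ∈ Icc 1 M, (-1 : ℚ)^μ * (M.choose μ : ℚ) = -1 := by linarith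
  have h3 : ∑ μ ∈ Icc 1 M, (-1 : ℚ)^(μ-1) * (M.choose μ : ℚ)
      = ∑ μ ∈ Icc 1 M, -((-1 : ℚ)^μ * (M.choose μ : ℚ)) := by
    refine Finset.sum_congr rfl fun μ hμ => ?_
    simp only [Finset.mem_Icc] at hμ
    obtain ⟨ν, rfl⟩ : ∃ ν, μ = ν + 1 := ⟨μ-1, by omega⟩
    simp only [Nat.add_sub_cancel, pow_succ]
    ring
  rw [h3, Finset.sum_neg_distrib, h2]
  norm_num

/-- `∑_{μ=1}^{c} (-1)^{μ-1} C(c,μ)/μ = ∑_{n=1}^{c} 1/n`. -/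
lemma MSW_alt_harm : ∀ c : ℕ,
    ∑ μ ∈ Icc 1 c, (-1 : ℚ)^(μ-1) * (c.choose μ : ℚ) / μ = ∑ n ∈ Icc 1 c, (1 : ℚ)/n := by
  intro c
  induction c with
  | zero => simp
  | succ c ih =>
    have hsplit : ∀ μ ∈ Icc 1 (c+1), (-1 : ℚ)^(μ-1) * ((c+1).choose μ : ℚ) / μ
        = (-1 : ℚ)^(μ-1) * (c.choose μ : ℚ) / μ + (-1 : ℚ)^(μ-1) * ((c+1).choose μ : ℚ) / (c+1) := by
      intro μ hμ
      simp only [Finset.mem_Icc] at hμ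
      obtain ⟨ν, rfl⟩ : ∃ ν, μ = ν + 1 := ⟨μ-1, by omega⟩
      have hpascal : (((c+1).choose (ν+1) : ℕ) : ℚ) = (c.choose ν : ℚ) + (c.choose (ν+1) : ℚ) := by
        exact_mod_cast congrArg (Nat.cast : ℕ → ℚ) (Nat.choose_succ_succ c ν)
      have hq : ((c+1 : ℕ) : ℚ) * (c.choose ν : ℚ) = ((c+1).choose (ν+1) : ℚ) * ((ν+1 : ℕ) : ℚ) := by
        exact_mod_cast congrArg (Nat.cast : ℕ → ℚ) (Nat.add_one_mul_choose_eq c ν)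
      push_cast at hpascal hq ⊢
      have hν : ((ν : ℚ) + 1) ≠ 0 := by positivity
      have hc : ((c : ℚ) + 1) ≠ 0 := by positivity
      have key : ((c+1).choose (ν+1):ℚ) * ((c:ℚ)-ν) = (c.choose (ν+1):ℚ) * ((c:ℚ)+1) := by
        push_cast
        linear_combination ((c:ℚ)+1)*hpascal + hq
      have key2 : ((c+1).choose (ν+1):ℚ)/((ν:ℚ)+1)
          = (c.choose (ν+1):ℚ)/((ν:ℚ)+1) + ((c+1).choose (ν+1):ℚ)/((c:ℚ)+1) := by
        field_simp
        linear_combination key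
      linear_combination ((-1:ℚ)^ν) * key2
    rw [Finset.sum_congr rfl hsplit, Finset.sum_add_distrib]
    have h1 : ∑ μ ∈ Icc 1 (c+1), (-1 : ℚ)^(μ-1) * (c.choose μ : ℚ) / μ
        = ∑ μ ∈ Icc 1 c, (-1 : ℚ)^(μ-1) * (c.choose μ : ℚ) / μ := by
      rw [show Icc 1 (c+1) = insert (c+1) (Icc 1 c) by ext n; simp [Finset.mem_Icc]; omega,
        Finset.sum_insert (by simp)]
      simp [Nat.choose_eq_zero_of_lt (by omega : c < c + 1)]
    have h2 : ∑ μ ∈ Icc 1 (c+1), (-1 : ℚ)^(μ-1) * ((c+1).choose μ : ℚ) / (c+1)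
        = 1/(c+1 : ℚ) := by
      rw [← Finset.sum_div, MSW_alt_sum_choose (c+1) (by omega)]
    rw [h1, h2, ih, show Icc 1 (c+1) = insert (c+1) (Icc 1 c) by ext n; simp [Finset.mem_Icc]; omega,
      Finset.sum_insert (by simp)]
    push_cast
    ring

lemma MSW_chooseQ_ne (n k : ℕ) (h : k ≤ n) : ((n.choose k : ℕ) : ℚ) ≠ 0 := by
  exact_mod_cast (Nat.choose_pos h).ne'

/-- step identity: `(p+1)·C(c,p+1) = (c-p)·C(c,p)` in ℚ (signed). -/
lemma MSW_choose_right_q (c p : ℕ) :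
    (((p:ℚ)+1)) * (c.choose (p+1) : ℚ) = ((c:ℚ) - p) * (c.choose p : ℚ) := by
  rcases le_or_gt (p+1) c with h | h
  · have := Nat.choose_succ_right_eq c p
    have hcast : ((c.choose (p+1) : ℕ) : ℚ) * ((p:ℚ)+1) = (c.choose p : ℚ) * (((c - p : ℕ) : ℕ) : ℚ) := by
      exact_mod_cast congrArg (Nat.cast : ℕ → ℚ) this
    rw [Nat.cast_sub (by omega)] at hcast
    linarith [hcast]
  · rcases Nat.lt_or_ge c p with h2 | h2
    · rw [Nat.choose_eq_zero_of_lt (by omega), Nat.choose_eq_zero_of_lt (by omega)]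
      ring
    · have : c = p := by omega
      subst this
      rw [Nat.choose_eq_zero_of_lt (by omega), Nat.choose_self]
      push_cast; ring

/-- KEY'' -/
lemma MSW_key2 (N c : ℕ) (hc : c + 2 ≤ N) : ∀ p, 1 ≤ p → p ≤ N-1 →
    (1 : ℚ) - (c.choose p : ℚ)/((N-1).choose p : ℚ)
      = ((N:ℚ) - 1 - c) * ∑ μ ∈ Icc 1 p, (c.choose (μ-1) : ℚ)/(μ * ((N-1).choose μ : ℚ)) := by
  intro p hp
  induction p, hp using Nat.le_induction with
  | base =>
    intro _
    have h1 : ((N-1).choose 1 : ℚ) = ((N:ℚ)-1) := by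
      rw [Nat.choose_one_right]
      push_cast [Nat.cast_sub (by omega : 1 ≤ N)]
      ring
    have hN : ((N:ℚ)-1) ≠ 0 := by
      have : (2:ℚ) ≤ N := by exact_mod_cast (by omega : 2 ≤ N)
      linarith
    simp only [Finset.Icc_self, Finset.sum_singleton]
    rw [h1, Nat.choose_one_right]
    simp only [Nat.sub_self, Nat.choose_zero_right]
    push_cast
    field_simp
  | succ p hp ih =>
    intro hpN
    have ihh := ih (by omega)
    rw [show Icc 1 (p+1) = insert (p+1) (Icc 1 p) by ext n; simp [Finset.mem_Icc]; omega,
      Finset.sum_insert (by simp), mul_add, ← ihh]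
    have hX : ((N-1).choose p : ℚ) ≠ 0 := MSW_chooseQ_ne _ _ (by omega)
    have hX' : ((N-1).choose (p+1) : ℚ) ≠ 0 := MSW_chooseQ_ne _ _ (by omega)
    have hp1 : ((p:ℚ)+1) ≠ 0 := by positivity
    have A : ((p:ℚ)+1) * ((N-1).choose (p+1) : ℚ) = ((N:ℚ)-1-p) * ((N-1).choose p : ℚ) := by
      have := MSW_choose_right_q (N-1) p
      rw [Nat.cast_sub (by omega : 1 ≤ N)] at this
      push_cast at this ⊢
      linarith [this]
    have B : ((p:ℚ)+1) * (c.choose (p+1) : ℚ) = ((c:ℚ) - p) * (c.choose p : ℚ) := MSW_choose_right_q c p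
    rw [show (p+1) - 1 = p from rfl]
    have E1 : ((c.choose (p+1) : ℕ):ℚ)/((N-1).choose (p+1) : ℚ)
        = (((c:ℚ)-p) * (c.choose p : ℚ))/(((p:ℚ)+1)*((N-1).choose (p+1) : ℚ)) := by
      rw [div_eq_div_iff hX' (mul_ne_zero hp1 hX')]
      linear_combination ((N-1).choose (p+1) : ℚ) * B
    have E2 : ((c.choose p : ℕ):ℚ)/((N-1).choose p : ℚ)
        = (((N:ℚ)-1-p) * (c.choose p : ℚ))/(((p:ℚ)+1)*((N-1).choose (p+1) : ℚ)) := by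
      rw [div_eq_div_iff hX (mul_ne_zero hp1 hX')]
      linear_combination (c.choose p : ℚ) * A
    push_cast
    push_cast at E1 E2
    rw [E1, E2]
    ring

/-- KEY' : `∑_{n=1}^{c} (1 - C(n-1,p)/C(N-1,p))/(N-n) = ∑_{μ=1}^{p} C(c,μ)/(μ C(N-1,μ))`. -/
lemma MSW_key1 (N p : ℕ) (hp : 1 ≤ p) (hpN : p ≤ N-1) : ∀ c, c ≤ N-1 →
    ∑ n ∈ Icc 1 c, ((1 : ℚ) - ((n-1).choose p : ℚ)/((N-1).choose p : ℚ)) * (1/((N:ℚ) - n))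
      = ∑ μ ∈ Icc 1 p, (1/(μ:ℚ)) * ((c.choose μ : ℚ)/((N-1).choose μ : ℚ)) := by
  intro c
  induction c with
  | zero =>
    intro _
    rw [show (Icc 1 0 : Finset ℕ) = ∅ by ext n; simp, Finset.sum_empty]
    refine (Finset.sum_eq_zero fun μ hμ => ?_).symm
    simp only [Finset.mem_Icc] at hμ
    rw [Nat.choose_eq_zero_of_lt (by omega : 0 < μ)]
    simp
  | succ c ih =>
    intro hc1
    rw [show Icc 1 (c+1) = insert (c+1) (Icc 1 c) by ext n; simp [Finset.mem_Icc]; omega,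
      Finset.sum_insert (by simp), ih (by omega)]
    have hstep : ∀ μ ∈ Icc 1 p, (1/(μ:ℚ)) * (((c+1).choose μ : ℚ)/((N-1).choose μ : ℚ))
        = (1/(μ:ℚ)) * ((c.choose μ : ℚ)/((N-1).choose μ : ℚ))
          + (c.choose (μ-1) : ℚ)/(μ * ((N-1).choose μ : ℚ)) := by
      intro μ hμ
      simp only [Finset.mem_Icc] at hμ
      obtain ⟨ν, rfl⟩ : ∃ ν, μ = ν + 1 := ⟨μ-1, by omega⟩
      have hpascal : (((c+1).choose (ν+1) : ℕ) : ℚ) = (c.choose ν : ℚ) + (c.choose (ν+1) : ℚ) := by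
        exact_mod_cast congrArg (Nat.cast : ℕ → ℚ) (Nat.choose_succ_succ c ν)
      rw [show (ν+1) - 1 = ν from rfl]
      have ha : ((ν:ℚ)+1) ≠ 0 := by positivity
      have hb : (((N-1).choose (ν+1) : ℕ) : ℚ) ≠ 0 := MSW_chooseQ_ne _ _ (by omega)
      push_cast at hpascal hb ⊢
      rw [hpascal]
      field_simp
      ring
    rw [Finset.sum_congr rfl hstep, Finset.sum_add_distrib]
    have hk2 := MSW_key2 N c (by omega) p hp hpN
    have hNc : (N:ℚ) - ((c:ℚ)+1) ≠ 0 := by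
      have : ((c:ℚ)+2) ≤ N := by exact_mod_cast (by omega : c + 2 ≤ N)
      linarith
    have key : ((1:ℚ) - ((c+1-1).choose p : ℚ)/((N-1).choose p : ℚ)) * (1/((N:ℚ) - ((c:ℚ)+1)))
        = ∑ μ ∈ Icc 1 p, (c.choose (μ-1) : ℚ)/(μ * ((N-1).choose μ : ℚ)) := by
      rw [show c+1-1 = c from rfl, hk2,
        show ((N:ℚ) - 1 - c) = (N:ℚ) - ((c:ℚ)+1) by ring]
      rw [mul_comm ((N:ℚ) - ((c:ℚ)+1)), mul_assoc, mul_one_div,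
        div_self hNc, mul_one]
    push_cast at key ⊢
    rw [key]
    ring

/-- ascending chain sum: variables `lo ≤ n₁ ≤ n₂ ≤ ⋯ ≤ hi`. -/
def asc2 : List (ℕ → ℚ) → ℕ → ℕ → ℚ
  | [], _, _ => 1
  | w :: ws, lo, hi => ∑ n ∈ Finset.Icc lo hi, w n * asc2 ws n hi

/-- descending chain sum: variables `hi ≥ n₁ ≥ n₂ ≥ ⋯ ≥ lo`. -/
def desc2 : List (ℕ → ℚ) → ℕ → ℕ → ℚ
  | [], _, _ => 1
  | w :: ws, lo, hi => ∑ n ∈ Finset.Icc lo hi, w n * desc2 ws lo n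

lemma MSW_desc2_concat (w : ℕ → ℚ) : ∀ (us : List (ℕ → ℚ)) (lo hi : ℕ),
    desc2 (us ++ [w]) lo hi = ∑ n ∈ Icc lo hi, w n * desc2 us n hi := by
  intro us
  induction us with
  | nil => intro lo hi; simp [desc2]
  | cons u us ih =>
    intro lo hi
    show ∑ a ∈ Icc lo hi, u a * desc2 (us ++ [w]) lo a = _
    calc ∑ a ∈ Icc lo hi, u a * desc2 (us ++ [w]) lo a
        = ∑ a ∈ Icc lo hi, ∑ n ∈ Icc lo a, u a * (w n * desc2 us n a) := by
          refine Finset.sum_congr rfl fun a _ => ?_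
          rw [ih, Finset.mul_sum]
      _ = ∑ n ∈ Icc lo hi, ∑ a ∈ Icc n hi, u a * (w n * desc2 us n a) :=
          MSW_sum_triangle lo hi _
      _ = ∑ n ∈ Icc lo hi, w n * desc2 (u :: us) n hi := by
          refine Finset.sum_congr rfl fun n _ => ?_
          show _ = w n * ∑ a ∈ Icc n hi, u a * desc2 us n a
          rw [Finset.mul_sum]
          exact Finset.sum_congr rfl fun a _ => by ring

lemma MSW_asc2_eq_desc2_reverse : ∀ (ws : List (ℕ → ℚ)) (lo hi : ℕ),
    asc2 ws lo hi = desc2 ws.reverse lo hi := by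
  intro ws
  induction ws with
  | nil => intro lo hi; rfl
  | cons w ws ih =>
    intro lo hi
    show (∑ n ∈ Icc lo hi, w n * asc2 ws n hi) = _
    rw [List.reverse_cons, MSW_desc2_concat]
    exact Finset.sum_congr rfl fun n _ => by rw [ih]

/-- the `1/m^k` weight. -/
def fwt (k : ℕ) : ℕ → ℚ := fun m => 1 / (m:ℚ)^k

/-- the weight carrying the alternating binomial. -/
def gwt (N k : ℕ) : ℕ → ℚ := fun m => (-1:ℚ)^(m-1) * ((N-1).choose m : ℚ) / (m:ℚ)^k

/-- the kernel `C(c,μ)/C(N-1,μ)`. -/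
def kerq (N c μ : ℕ) : ℚ := (c.choose μ : ℚ) / ((N-1).choose μ : ℚ)

/-- head weight of the harmonic image of the flat tail `(j, t)`. -/
def hwt (N j : ℕ) : List ℕ → (ℕ → ℚ)
  | [] => gwt N j
  | _ :: _ => fwt j

/-- tail weights of the harmonic image. -/
def tlw (N : ℕ) : List ℕ → List (ℕ → ℚ)
  | [] => []
  | k :: t => hwt N k t :: tlw N t

/-- kernel-deformed ascending sum. -/
def ascK (N c : ℕ) : List (ℕ → ℚ) → ℚ
  | [] => 1
  | w :: ws => ∑ μ ∈ Icc 1 (N-1), kerq N c μ * (w μ * asc2 ws μ (N-1))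

lemma zetaStarAux_eq_desc2 : ∀ (t : List ℕ) (m : ℕ),
    zetaStarAux (m+1) t = desc2 (t.map fwt) 1 m := by
  intro t
  induction t with
  | nil => intro m; rfl
  | cons k t ih =>
    intro m
    show ∑ m' ∈ Finset.Ioo 0 (m+1), (1 / (m' : ℚ) ^ k) * zetaStarAux (m' + 1) t = _
    rw [show Finset.Ioo 0 (m+1) = Finset.Icc 1 m by ext n; simp [Finset.mem_Icc]; omega]
    exact Finset.sum_congr rfl fun n _ => by rw [ih]; rfl

lemma hAux_zero_cons (N lo hi k : ℕ) (t : List ℕ) :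
    hAux N lo hi 0 (k::t) = hAux N lo (N-1) k t := by rw [hAux]

lemma hAux_one_nil (N lo hi : ℕ) :
    hAux N lo hi 1 [] = ∑ n ∈ Icc lo hi, (1/(n:ℚ)) := by rw [hAux]

lemma hAux_one_cons (N lo hi k : ℕ) (t : List ℕ) :
    hAux N lo hi 1 (k::t) = ∑ n ∈ Icc lo hi, (1/((N:ℚ)-(n:ℚ))) * hAux N n (N-1) k t := by
  rw [hAux]
  exact Finset.sum_congr rfl fun n _ => by rw [hAux_zero_cons]

lemma hAux_two (N lo hi j : ℕ) (t : List ℕ) :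
    hAux N lo hi (j+2) t = ∑ n ∈ Icc lo hi, (1/(n:ℚ)) * hAux N 1 n (j+1) t := by rw [hAux]

/-- splitting the range of the top variable. -/
lemma hAux_split (N j : ℕ) (t : List ℕ) (lo : ℕ) (h1 : 1 ≤ lo) (h2 : lo ≤ N) :
    hAux N lo (N-1) (j+1) t = hAux N 1 (N-1) (j+1) t - hAux N 1 (lo-1) (j+1) t := by
  have h3 : lo ≤ (N-1) + 1 := by omega
  rcases j with _ | j'
  · rcases t with _ | ⟨k, t'⟩
    · rw [hAux_one_nil, hAux_one_nil, hAux_one_nil,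
        MSW_sum_split (fun n => (1/(n:ℚ))) lo (N-1) h1 h3]
      ring
    · rw [hAux_one_cons, hAux_one_cons, hAux_one_cons,
        MSW_sum_split (fun n => (1/((N:ℚ)-(n:ℚ))) * hAux N n (N-1) k t') lo (N-1) h1 h3]
      ring
  · rw [hAux_two, hAux_two, hAux_two,
      MSW_sum_split (fun n => (1/(n:ℚ)) * hAux N 1 n (j'+1) t) lo (N-1) h1 h3]
    ring

lemma MSW_hockey_ker (N μ : ℕ) (hμ : 1 ≤ μ) (c : ℕ) :
    ∑ n ∈ Icc 1 c, (1/(n:ℚ)) * kerq N n μ = kerq N c μ * (1/(μ:ℚ)) := by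
  unfold kerq
  have h : ∑ n ∈ Icc 1 c, (1/(n:ℚ)) * ((n.choose μ : ℚ) / ((N-1).choose μ : ℚ))
      = (∑ n ∈ Icc 1 c, (n.choose μ : ℚ)/n) / ((N-1).choose μ : ℚ) := by
    rw [Finset.sum_div]
    exact Finset.sum_congr rfl fun n _ => by ring
  rw [h, MSW_hockey μ hμ c]
  ring

lemma MSW_hwt_succ (N : ℕ) (t : List ℕ) (j μ : ℕ) (hμ : 1 ≤ μ) :
    (1/(μ:ℚ)) * hwt N (j+1) t μ = hwt N (j+2) t μ := by
  have hμq : (μ:ℚ) ≠ 0 := by positivity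
  rcases t with _ | ⟨k, t'⟩
  · show (1/(μ:ℚ)) * ((-1:ℚ)^(μ-1) * ((N-1).choose μ : ℚ) / (μ:ℚ)^(j+1))
        = (-1:ℚ)^(μ-1) * ((N-1).choose μ : ℚ) / (μ:ℚ)^(j+2)
    rw [pow_succ ((μ:ℚ)) (j+1)]
    field_simp
  · show (1/(μ:ℚ)) * (1 / (μ:ℚ)^(j+1)) = 1 / (μ:ℚ)^(j+2)
    rw [pow_succ ((μ:ℚ)) (j+1)]
    field_simp

lemma MSW_master_step (N : ℕ) (t : List ℕ) (j : ℕ)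
    (hrec : ∀ c, c ≤ N-1 → hAux N 1 c (j+1) t = ascK N c (hwt N (j+1) t :: tlw N t)) :
    ∀ c, c ≤ N-1 → hAux N 1 c (j+2) t = ascK N c (hwt N (j+2) t :: tlw N t) := by
  intro c hc
  rw [hAux_two]
  calc ∑ n ∈ Icc 1 c, (1/(n:ℚ)) * hAux N 1 n (j+1) t
      = ∑ n ∈ Icc 1 c, ∑ μ ∈ Icc 1 (N-1),
          (1/(n:ℚ)) * kerq N n μ * (hwt N (j+1) t μ * asc2 (tlw N t) μ (N-1)) := by
        refine Finset.sum_congr rfl fun n hn => ?_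
        simp only [Finset.mem_Icc] at hn
        rw [hrec n (by omega)]
        show (1/(n:ℚ)) * ∑ μ ∈ Icc 1 (N-1), kerq N n μ * (hwt N (j+1) t μ * asc2 (tlw N t) μ (N-1)) = _
        rw [Finset.mul_sum]
        exact Finset.sum_congr rfl fun μ _ => by ring
    _ = ∑ μ ∈ Icc 1 (N-1), ∑ n ∈ Icc 1 c,
          (1/(n:ℚ)) * kerq N n μ * (hwt N (j+1) t μ * asc2 (tlw N t) μ (N-1)) :=
        Finset.sum_comm
    _ = ∑ μ ∈ Icc 1 (N-1), kerq N c μ * (hwt N (j+2) t μ * asc2 (tlw N t) μ (N-1)) := by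
        refine Finset.sum_congr rfl fun μ hμ => ?_
        simp only [Finset.mem_Icc] at hμ
        rw [← Finset.sum_mul, MSW_hockey_ker N μ hμ.1 c, ← MSW_hwt_succ N t j μ hμ.1]
        ring
    _ = ascK N c (hwt N (j+2) t :: tlw N t) := rfl

/-- E-MASTER. -/
lemma MSW_master (N : ℕ) : ∀ (t : List ℕ), (∀ a ∈ t, 0 < a) → ∀ (j c : ℕ), c ≤ N-1 →
    hAux N 1 c (j+1) t = ascK N c (hwt N (j+1) t :: tlw N t) := by
  intro t
  induction t with
  | nil =>
    intro _ j
    induction j with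
    | zero =>
      intro c hc
      rw [hAux_one_nil]
      show _ = ∑ μ ∈ Icc 1 (N-1), kerq N c μ * (hwt N 1 [] μ * asc2 (tlw N []) μ (N-1))
      have h1 : ∀ μ ∈ Icc 1 (N-1), kerq N c μ * (hwt N 1 [] μ * asc2 (tlw N []) μ (N-1))
          = (-1:ℚ)^(μ-1) * (c.choose μ : ℚ) / μ := by
        intro μ hμ
        simp only [Finset.mem_Icc] at hμ
        have hnz : (((N-1).choose μ : ℕ) : ℚ) ≠ 0 := MSW_chooseQ_ne _ _ hμ.2
        show (c.choose μ : ℚ) / ((N-1).choose μ : ℚ)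
            * ((-1:ℚ)^(μ-1) * ((N-1).choose μ : ℚ) / (μ:ℚ)^1 * 1) = _
        have hμq : (μ:ℚ) ≠ 0 := Nat.cast_ne_zero.mpr (by omega)
        field_simp
      rw [Finset.sum_congr rfl h1, ← MSW_alt_harm c]
      refine Finset.sum_subset (fun x hx => ?_) (fun x hx hnx => ?_)
      · simp only [Finset.mem_Icc] at hx ⊢; omega
      · simp only [Finset.mem_Icc] at hx hnx
        rw [Nat.choose_eq_zero_of_lt (by omega : c < x)]
        simp
    | succ j ihj => exact MSW_master_step N [] j ihj
  | cons k t' iht =>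
    intro ht j
    have ht' : ∀ a ∈ t', 0 < a := fun a ha => ht a (List.mem_cons_of_mem _ ha)
    have hk : 0 < k := ht k List.mem_cons_self
    induction j with
    | zero =>
      intro c hc
      obtain ⟨k', rfl⟩ : ∃ k', k = k'+1 := ⟨k-1, by omega⟩
      rw [hAux_one_cons]
      have hsplit : ∀ n ∈ Icc 1 c, (1/((N:ℚ)-(n:ℚ))) * hAux N n (N-1) (k'+1) t'
          = ∑ μ' ∈ Icc 1 (N-1), ((1 - kerq N (n-1) μ') * (1/((N:ℚ)-(n:ℚ))))
              * (hwt N (k'+1) t' μ' * asc2 (tlw N t') μ' (N-1)) := by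
        intro n hn
        simp only [Finset.mem_Icc] at hn
        rw [hAux_split N k' t' n (by omega) (by omega),
          iht ht' k' (N-1) (le_refl _), iht ht' k' (n-1) (by omega)]
        show (1/((N:ℚ)-(n:ℚ))) *
            ((∑ μ' ∈ Icc 1 (N-1), kerq N (N-1) μ' * (hwt N (k'+1) t' μ' * asc2 (tlw N t') μ' (N-1)))
            - ∑ μ' ∈ Icc 1 (N-1), kerq N (n-1) μ' * (hwt N (k'+1) t' μ' * asc2 (tlw N t') μ' (N-1))) = _
        rw [← Finset.sum_sub_distrib, Finset.mul_sum]
        refine Finset.sum_congr rfl fun μ' hμ' => ?_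
        simp only [Finset.mem_Icc] at hμ'
        have hker1 : kerq N (N-1) μ' = 1 := by
          unfold kerq
          exact div_self (MSW_chooseQ_ne _ _ hμ'.2)
        rw [hker1]
        ring
      rw [Finset.sum_congr rfl hsplit, Finset.sum_comm]
      have happ : ∀ μ' ∈ Icc 1 (N-1), ∑ n ∈ Icc 1 c, ((1 - kerq N (n-1) μ') * (1/((N:ℚ)-(n:ℚ))))
            * (hwt N (k'+1) t' μ' * asc2 (tlw N t') μ' (N-1))
          = ∑ μ ∈ Icc 1 μ', ((1/(μ:ℚ)) * kerq N c μ)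
            * (hwt N (k'+1) t' μ' * asc2 (tlw N t') μ' (N-1)) := by
        intro μ' hμ'
        simp only [Finset.mem_Icc] at hμ'
        rw [← Finset.sum_mul, ← Finset.sum_mul]
        congr 1
        exact MSW_key1 N μ' hμ'.1 hμ'.2 c hc
      rw [Finset.sum_congr rfl happ, MSW_sum_triangle 1 (N-1)
        (fun μ' μ => ((1/(μ:ℚ)) * kerq N c μ) * (hwt N (k'+1) t' μ' * asc2 (tlw N t') μ' (N-1)))]
      show _ = ∑ μ ∈ Icc 1 (N-1), kerq N c μ
          * (hwt N 1 ((k'+1)::t') μ * asc2 (tlw N ((k'+1)::t')) μ (N-1))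
      refine Finset.sum_congr rfl fun μ hμ => ?_
      simp only [Finset.mem_Icc] at hμ
      have hasc : asc2 (tlw N ((k'+1)::t')) μ (N-1)
          = ∑ μ' ∈ Icc μ (N-1), hwt N (k'+1) t' μ' * asc2 (tlw N t') μ' (N-1) := rfl
      rw [hasc, Finset.mul_sum, Finset.mul_sum]
      refine Finset.sum_congr rfl fun μ' _ => ?_
      show (1/(μ:ℚ)) * kerq N c μ * (hwt N (k'+1) t' μ' * asc2 (tlw N t') μ' (N-1))
          = kerq N c μ * (fwt 1 μ * (hwt N (k'+1) t' μ' * asc2 (tlw N t') μ' (N-1)))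
      show _ = kerq N c μ * (1/(μ:ℚ)^1 * (hwt N (k'+1) t' μ' * asc2 (tlw N t') μ' (N-1)))
      rw [pow_one]
      ring
    | succ j ihj => exact MSW_master_step N (k::t') j ihj

lemma MSW_ascK_top (N : ℕ) : ∀ ws : List (ℕ → ℚ), ascK N (N-1) ws = asc2 ws 1 (N-1) := by
  intro ws
  rcases ws with _ | ⟨w, ws⟩
  · rfl
  · show ∑ μ ∈ Icc 1 (N-1), kerq N (N-1) μ * (w μ * asc2 ws μ (N-1))
        = ∑ μ ∈ Icc 1 (N-1), w μ * asc2 ws μ (N-1)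
    refine Finset.sum_congr rfl fun μ hμ => ?_
    simp only [Finset.mem_Icc] at hμ
    have hker1 : kerq N (N-1) μ = 1 := div_self (MSW_chooseQ_ne _ _ hμ.2)
    rw [hker1, one_mul]

lemma MSW_wchain_concat (N : ℕ) : ∀ (u : List ℕ) (kr a : ℕ),
    hwt N a (u++[kr]) :: tlw N (u++[kr]) = fwt a :: (u.map fwt ++ [gwt N kr]) := by
  intro u
  induction u with
  | nil => intro kr a; rfl
  | cons b u' ih =>
    intro kr a
    show fwt a :: (hwt N b (u'++[kr]) :: tlw N (u'++[kr])) = _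
    rw [ih kr b]
    rfl

end MSWHelpers

/-- Proposition 4.2: `H_{<N}(k) = H♭_{<N}(k)` for every nonempty index `k` and `N > 0`. -/
theorem MSW_Hoffman (N : ℕ) (hN : 0 < N) (ks : List ℕ) (hne : ks ≠ [])
    (hks : ∀ a ∈ ks, 0 < a) :
    hoffmanSum N ks = hoffmanFlat N ks := by
  obtain ⟨u, kr, rfl⟩ : ∃ u kr, ks = u ++ [kr] := by
    rcases List.eq_nil_or_concat ks with h | ⟨u, kr, h⟩
    · exact absurd h hne
    · exact ⟨u, kr, by rw [h, List.concat_eq_append]⟩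
  -- flat side
  have hflat : hoffmanFlat N (u ++ [kr]) = asc2 (u.map fwt ++ [gwt N kr]) 1 (N-1) := by
    unfold hoffmanFlat
    rcases u with _ | ⟨k₁, u'⟩
    · have hkr : 0 < kr := hks kr (by simp)
      obtain ⟨kr', rfl⟩ : ∃ kr', kr = kr'+1 := ⟨kr-1, by omega⟩
      rw [show (([] ++ [(kr'+1)]) : List ℕ) = [(kr'+1)] from rfl, hAux_zero_cons,
        MSW_master N [] (by simp) kr' (N-1) (le_refl _), MSW_ascK_top]
      rfl
    · have hk₁ : 0 < k₁ := hks k₁ (by simp)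
      obtain ⟨k₁', rfl⟩ : ∃ k', k₁ = k'+1 := ⟨k₁-1, by omega⟩
      rw [show ((((k₁'+1) :: u') ++ [kr]) : List ℕ) = (k₁'+1) :: (u' ++ [kr]) from rfl,
        hAux_zero_cons,
        MSW_master N (u' ++ [kr]) (fun a ha => hks a (by rw [List.cons_append]; exact List.mem_cons_of_mem _ ha)) k₁' (N-1) (le_refl _),
        MSW_ascK_top, MSW_wchain_concat]
      rfl
  rw [hflat, MSW_asc2_eq_desc2_reverse]
  have hrev : (List.map fwt u ++ [gwt N kr]).reverse = gwt N kr :: (u.reverse.map fwt) := by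
    rw [List.reverse_append, List.reverse_singleton, List.map_reverse]
    rfl
  rw [hrev]
  -- hoffman side
  have hks_rev : (u ++ [kr]).reverse = kr :: u.reverse := by
    rw [List.reverse_append, List.reverse_singleton]
    rfl
  show hoffmanSum N (u ++ [kr]) = _
  unfold hoffmanSum
  rw [hks_rev]
  show (∑ m ∈ Finset.Ioo 0 N,
      ((-1 : ℚ) ^ (m - 1) * ((N - 1).choose m : ℚ) / (m : ℚ) ^ kr) * zetaStarAux (m + 1) u.reverse)
    = ∑ n ∈ Finset.Icc 1 (N-1), gwt N kr n * desc2 (u.reverse.map fwt) 1 n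
  rw [show Finset.Ioo 0 N = Finset.Icc 1 (N-1) by ext n; simp [Finset.mem_Icc]; omega]
  refine Finset.sum_congr rfl fun m hm => ?_
  rw [zetaStarAux_eq_desc2]
  rfl
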